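/- For the radial zero-energy scattering equation -u''(r) + v(r)u(r) = 0 with u(0) = 0 and v nonnegative with support in [0, R₀], the scattering length a (defined by u(r) = const·(r - a) for r > R₀) satisfies 0 ≤ a ≤ R₀. -/

import Mathlib

open Set Filter

private lemma scat_aux
    (v : ℝ → ℝ) (R₀ : ℝ) (hR₀ : 0 < R₀)
    (hv0 : ∀ r, 0 ≤ v r)
    (hsupp : ∀ r, R₀ < r → v r = 0)
    (u : ℝ → ℝ)
    (hu : ContDiff ℝ 1 u)
    (hu' : ∀ r, 0 ≤ r → DifferentiableAt ℝ (deriv u) r)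
    (hODE : ∀ r, 0 ≤ r → deriv (deriv u) r = v r * u r)
    (hu0 : u 0 = 0)
    (c a : ℝ) (hc : 0 < c)
    (hlin : ∀ r, R₀ < r → u r = c * (r - a)) :
    0 ≤ a ∧ a ≤ R₀ := by
  have hucont : Continuous u := hu.continuous
  have hudiff : Differentiable ℝ u := hu.differentiable (by norm_num)
  have hpos : ∀ r, max R₀ a < r → 0 < u r := by
    intro r hr
    have h1 : R₀ < r := (le_max_left _ _).trans_lt hr
    have h2 : a < r := (le_max_right _ _).trans_lt hr
    rw [hlin r h1]
    nlinarith
  -- u is nonnegative on [0, ∞)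
  have hnonneg : ∀ r, 0 ≤ r → 0 ≤ u r := by
    by_contra h
    push_neg at h
    obtain ⟨r₀, hr₀0, hr₀neg⟩ := h
    set M := max R₀ a + 1 with hM
    have hMpos : max R₀ a < M := by simp [hM]
    have hr₀M : r₀ < M := by
      by_contra hcon
      push_neg at hcon
      exact absurd (hpos r₀ (lt_of_lt_of_le hMpos hcon)) (by linarith)
    have huM : 0 < u M := hpos M hMpos
    -- a zero above r₀
    have hz1 : ∃ z ∈ Icc r₀ M, u z = 0 := by
      have := intermediate_value_Icc hr₀M.le hucont.continuousOn
      have h0 : (0:ℝ) ∈ Icc (u r₀) (u M) := ⟨hr₀neg.le, huM.le⟩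
      obtain ⟨z, hz, hz0⟩ := this h0
      exact ⟨z, hz, hz0⟩
    set S₁ : Set ℝ := {r ∈ Icc r₀ M | u r = 0} with hS₁
    have hS₁ne : S₁.Nonempty := hz1
    have hS₁comp : IsCompact S₁ :=
      (isCompact_Icc.inter_right (isClosed_eq hucont continuous_const))
    set r₁ := sInf S₁ with hr₁def
    have hr₁mem : r₁ ∈ S₁ := hS₁comp.sInf_mem hS₁ne
    have hr₁zero : u r₁ = 0 := hr₁mem.2
    have hr₁ge : r₀ ≤ r₁ := hr₁mem.1.1
    have hr₁gt : r₀ < r₁ := hr₁ge.lt_of_ne (fun h => by rw [← h] at hr₁zero; linarith)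
    set S₂ : Set ℝ := {r ∈ Icc 0 r₀ | u r = 0} with hS₂
    have hS₂ne : S₂.Nonempty := ⟨0, ⟨le_rfl, hr₀0⟩, hu0⟩
    have hS₂comp : IsCompact S₂ :=
      (isCompact_Icc.inter_right (isClosed_eq hucont continuous_const))
    set r₂ := sSup S₂ with hr₂def
    have hr₂mem : r₂ ∈ S₂ := hS₂comp.sSup_mem hS₂ne
    have hr₂zero : u r₂ = 0 := hr₂mem.2
    have hr₂le : r₂ ≤ r₀ := hr₂mem.1.2
    have hr₂0 : 0 ≤ r₂ := hr₂mem.1.1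
    have hr₂lt : r₂ < r₀ := hr₂le.lt_of_ne (fun h => by rw [h] at hr₂zero; linarith)
    -- no zeros strictly between r₂ and r₁
    have hnozero : ∀ z, r₂ < z → z < r₁ → u z ≠ 0 := by
      intro z hz2 hz1' hz0
      rcases lt_trichotomy z r₀ with h | h | h
      · have : z ∈ S₂ := ⟨⟨by linarith, h.le⟩, hz0⟩
        exact absurd (le_csSup hS₂comp.bddAbove this) (not_le.mpr hz2)
      · subst h; linarith [hr₀neg, hz0]
      · have : z ∈ S₁ := ⟨⟨h.le, by linarith [hr₁mem.1.2]⟩, hz0⟩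
        exact absurd (csInf_le hS₁comp.bddBelow this) (not_le.mpr hz1')
    -- u is negative on the open interval
    have hneg : ∀ t, r₂ < t → t < r₁ → u t < 0 := by
      intro t ht2 ht1
      rcases lt_trichotomy (u t) 0 with h | h | h
      · exact h
      · exact absurd h (hnozero t ht2 ht1)
      · -- u t > 0 : IVT between t and r₀ gives a forbidden zero
        rcases lt_trichotomy t r₀ with htr | htr | htr
        · obtain ⟨z, hz, hz0⟩ :=
            intermediate_value_Icc' htr.le hucont.continuousOn ⟨hr₀neg.le, h.le⟩
          have hzt : z ≠ t := fun hh => by rw [hh] at hz0; linarith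
          have hzr : z ≠ r₀ := fun hh => by rw [hh] at hz0; linarith
          have h1 : t < z := lt_of_le_of_ne hz.1 (Ne.symm hzt)
          have h2 : z < r₀ := lt_of_le_of_ne hz.2 hzr
          exact absurd hz0 (hnozero z (by linarith) (by linarith))
        · subst htr; linarith
        · obtain ⟨z, hz, hz0⟩ :=
            intermediate_value_Icc htr.le hucont.continuousOn ⟨hr₀neg.le, h.le⟩
          have hzt : z ≠ t := fun hh => by rw [hh] at hz0; linarith
          have hzr : z ≠ r₀ := fun hh => by rw [hh] at hz0; linarith
          have h1 : r₀ < z := lt_of_le_of_ne hz.1 (Ne.symm hzr)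
          have h2 : z < t := lt_of_le_of_ne hz.2 hzt
          exact absurd hz0 (hnozero z (by linarith) (by linarith))
    -- u is concave on [r₂, r₁]
    have hconc : ConcaveOn ℝ (Icc r₂ r₁) u := by
      apply concaveOn_of_deriv2_nonpos (convex_Icc _ _) hucont.continuousOn
        (hudiff.differentiableOn)
      · intro x hx
        rw [interior_Icc] at hx
        exact (hu' x (le_trans hr₂0 hx.1.le)).differentiableWithinAt
      · intro x hx
        rw [interior_Icc] at hx
        have h2 : deriv^[2] u x = deriv (deriv u) x := by
          simp [Function.iterate_succ_apply']
        rw [h2, hODE x (le_trans hr₂0 hx.1.le)]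
        exact mul_nonpos_of_nonneg_of_nonpos (hv0 x) (hneg x hx.1 hx.2).le
    have hmem : r₀ ∈ segment ℝ r₂ r₁ := by
      rw [segment_eq_Icc (by linarith)]
      exact ⟨hr₂lt.le, hr₁gt.le⟩
    have := hconc.ge_on_segment (left_mem_Icc.mpr (by linarith)) (right_mem_Icc.mpr (by linarith)) hmem
    rw [hr₂zero, hr₁zero] at this
    simp at this
    linarith
  -- u is convex on [0, ∞)
  have hconv : ConvexOn ℝ (Ici 0) u := by
    apply convexOn_of_deriv2_nonneg (convex_Ici _) hucont.continuousOn hudiff.differentiableOn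
    · intro x hx
      rw [interior_Ici] at hx
      exact (hu' x hx.le).differentiableWithinAt
    · intro x hx
      rw [interior_Ici] at hx
      have h2 : deriv^[2] u x = deriv (deriv u) x := by
        simp [Function.iterate_succ_apply']
      rw [h2, hODE x hx.le]
      exact mul_nonneg (hv0 x) (hnonneg x hx.le)
  -- 0 ≤ a from slope monotonicity
  have ha0 : 0 ≤ a := by
    have h := hconv.slope_mono_adjacent (x := 0) (y := R₀ + 1) (z := R₀ + 2)
      (self_mem_Ici) (mem_Ici.mpr (by linarith)) (by linarith) (by linarith)
    rw [hu0, hlin (R₀+1) (by linarith), hlin (R₀+2) (by linarith)] at h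
    rw [div_le_div_iff₀ (by linarith) (by linarith)] at h
    nlinarith
  -- u R₀ = c * (R₀ - a) by continuity from the right
  have huR : u R₀ = c * (R₀ - a) := by
    have t1 : Tendsto u (nhdsWithin R₀ (Ioi R₀)) (nhds (u R₀)) :=
      (hucont.tendsto R₀).mono_left nhdsWithin_le_nhds
    have t2 : Tendsto (fun r => c * (r - a)) (nhdsWithin R₀ (Ioi R₀)) (nhds (c * (R₀ - a))) :=
      ((continuous_const.mul (continuous_id.sub continuous_const)).tendsto R₀).mono_left
        nhdsWithin_le_nhds
    have heq : u =ᶠ[nhdsWithin R₀ (Ioi R₀)] (fun r => c * (r - a)) :=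
      eventually_nhdsWithin_of_forall (fun r hr => hlin r hr)
    exact tendsto_nhds_unique (t1.congr' heq) t2
  have haR : a ≤ R₀ := by
    have h0 : 0 ≤ c * (R₀ - a) := huR ▸ hnonneg R₀ hR₀.le
    nlinarith
  exact ⟨ha0, haR⟩

/-- For the radial zero-energy scattering equation `-u'' + v u = 0` on `[0,∞)` with `u(0) = 0`
and `v ≥ 0` supported in `[0, R₀]`, the scattering length `a`, defined by
`u(r) = c (r - a)` for `r > R₀` with `c ≠ 0`, satisfies `0 ≤ a ≤ R₀`. -/
theorem scattering_length_in_range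
    (v : ℝ → ℝ) (R₀ : ℝ) (hR₀ : 0 < R₀)
    (hv0 : ∀ r, 0 ≤ v r) (hvmeas : Measurable v)
    (hsupp : ∀ r, R₀ < r → v r = 0)
    (u : ℝ → ℝ)
    (hu : ContDiff ℝ 1 u)
    (hu' : ∀ r, 0 ≤ r → DifferentiableAt ℝ (deriv u) r)
    (hODE : ∀ r, 0 ≤ r → deriv (deriv u) r = v r * u r)
    (hu0 : u 0 = 0)
    (c a : ℝ) (hc : c ≠ 0)
    (hlin : ∀ r, R₀ < r → u r = c * (r - a)) :
    0 ≤ a ∧ a ≤ R₀ := by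
  rcases hc.lt_or_gt with hneg | hpos
  · -- apply the aux lemma to -u and -c
    have hderiv_neg : deriv (fun x => -u x) = fun x => -deriv u x := by
      funext x; exact deriv.fun_neg
    refine scat_aux v R₀ hR₀ hv0 hsupp (fun x => -u x) hu.neg ?_ ?_ (by simp [hu0])
      (-c) a (by linarith) ?_
    · intro r hr
      rw [hderiv_neg]
      exact (hu' r hr).neg
    · intro r hr
      rw [hderiv_neg]
      have : deriv (fun x => -deriv u x) r = -deriv (deriv u) r := deriv.fun_neg
      rw [this, hODE r hr]; ring
    · intro r hr
      show -u r = -c * (r - a)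
      rw [hlin r hr]; ring
  · exact scat_aux v R₀ hR₀ hv0 hsupp u hu hu' hODE hu0 c a hpos hlin
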